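/- Let G be a graph and let A, B ⊆ V(G) be disjoint sets such that every vertex of A is adjacent to every vertex of B. Then for every tree decomposition (T, {X_t}) of G there exists a node t ∈ V(T) such that A ⊆ X_t or B ⊆ X_t. -/

import Mathlib

open SimpleGraph

section TreeAux

variable {T : Type} {tree : SimpleGraph T}

/-- The unique path between two vertices of a tree. -/
noncomputable def tpath (ht : tree.IsTree) (p q : T) : tree.Walk p q :=
  (ht.existsUnique_path p q).choose

lemma tpath_isPath (ht : tree.IsTree) (p q : T) : (tpath ht p q).IsPath :=
  (ht.existsUnique_path p q).choose_spec.1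

lemma path_eq_tpath (ht : tree.IsTree) {p q : T} {R : tree.Walk p q} (hR : R.IsPath) :
    R = tpath ht p q :=
  (ht.existsUnique_path p q).choose_spec.2 R hR

lemma tpath_concat (ht : tree.IsTree) [DecidableEq T] (p q r : T) :
    ∀ x ∈ (tpath ht p r).support,
      x ∈ (tpath ht p q).support ∨ x ∈ (tpath ht q r).support := by
  intro x hx
  set W := (tpath ht p q).append (tpath ht q r) with hW
  have he : W.bypass = tpath ht p r := path_eq_tpath ht W.bypass_isPath
  rw [← he] at hx
  have := W.support_bypass_subset hx
  rwa [hW, Walk.mem_support_append_iff] at this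

lemma aux_median {z : T} :
    ∀ {x y : T} (P : tree.Walk x y) (Q : tree.Walk y z), P.IsPath → Q.IsPath →
    ∃ (m : T) (R : tree.Walk x z), R.IsPath ∧ m ∈ P.support ∧ m ∈ Q.support ∧ m ∈ R.support ∧
      ∀ a ∈ R.support, a ∈ P.support ∨ a ∈ Q.support := by
  classical
  intro x y P
  induction P with
  | @nil a =>
      intro Q _ hQ
      exact ⟨a, Q, hQ, by simp, Q.start_mem_support, Q.start_mem_support,
        fun a ha => Or.inr ha⟩
  | @cons a b c h p ih =>
      intro Q hP hQ
      obtain ⟨hp, hap⟩ := (Walk.cons_isPath_iff _ _).mp hP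
      by_cases haQ : a ∈ Q.support
      · exact ⟨a, Q.dropUntil a haQ, hQ.dropUntil haQ, Walk.start_mem_support _, haQ,
          Walk.start_mem_support _, fun x hx => Or.inr (Q.support_dropUntil_subset haQ hx)⟩
      · obtain ⟨m, R, hR, hmP, hmQ, hmR, hsub⟩ := ih Q hp hQ
        have haR : a ∉ R.support := by
          intro hc
          rcases hsub a hc with h1 | h2
          · exact hap h1
          · exact haQ h2
        refine ⟨m, Walk.cons h R, (Walk.cons_isPath_iff _ _).mpr ⟨hR, haR⟩, ?_, hmQ, ?_, ?_⟩
        · simp [hmP]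
        · simp [hmR]
        · intro w hw
          rw [Walk.support_cons, List.mem_cons] at hw
          rcases hw with rfl | hw
          · exact Or.inl (Walk.start_mem_support _)
          · rcases hsub w hw with h1 | h2
            · exact Or.inl (by simp [h1])
            · exact Or.inr h2

lemma tpath_median (ht : tree.IsTree) (x y z : T) :
    ∃ m, m ∈ (tpath ht x y).support ∧ m ∈ (tpath ht y z).support ∧
      m ∈ (tpath ht x z).support := by
  obtain ⟨m, R, hR, h1, h2, h3, -⟩ :=
    aux_median (tpath ht x y) (tpath ht y z) (tpath_isPath ht x y) (tpath_isPath ht y z)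
  rw [path_eq_tpath ht hR] at h3
  exact ⟨m, h1, h2, h3⟩

lemma crossing {y : T} (S : Set T) :
    ∀ {x : T} (P : tree.Walk x y), P.IsPath → x ∈ S → y ∉ S →
      ∃ u v, tree.Adj u v ∧ u ∈ S ∧ v ∉ S ∧ ∃ Q : tree.Walk v y, Q.IsPath ∧ u ∉ Q.support := by
  intro x P
  induction P with
  | nil => intro _ hx hy; exact absurd hx hy
  | @cons a b c h p ih =>
      intro hP hx hy
      obtain ⟨hp, hap⟩ := (Walk.cons_isPath_iff _ _).mp hP
      by_cases hw : b ∈ S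
      · exact ih hp hw hy
      · exact ⟨a, b, h, hx, hw, p, hp, hap⟩

lemma reach_del {u v a b : T} (W : tree.Walk a b)
    (h : u ∉ W.support ∨ v ∉ W.support) :
    (tree \ SimpleGraph.fromEdgeSet {s(u, v)}).Reachable a b := by
  have hcond : ∀ e ∈ W.edges, e ∉ ({s(u, v)} : Set (Sym2 T)) := by
    intro e he hmem
    rw [Set.mem_singleton_iff] at hmem
    subst hmem
    rcases h with h | h
    · exact h (W.fst_mem_support_of_mem_edges he)
    · exact h (W.snd_mem_support_of_mem_edges he)
  exact ⟨W.toDeleteEdges _ hcond⟩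

lemma cross_edge (ht : tree.IsTree) {u v : T} (huv : tree.Adj u v) {p q : T}
    (hp : v ∉ (tpath ht u p).support) (hq : u ∉ (tpath ht v q).support) :
    u ∈ (tpath ht p q).support ∧ v ∈ (tpath ht p q).support := by
  have hb : tree.IsBridge s(u, v) :=
    (isAcyclic_iff_forall_adj_isBridge.mp ht.IsAcyclic) huv
  have hnr : ¬(tree \ SimpleGraph.fromEdgeSet {s(u, v)}).Reachable u v :=
    isBridge_iff.mp hb
  have key : u ∉ (tpath ht p q).support ∨ v ∉ (tpath ht p q).support → False := by
    intro h
    refine hnr (((reach_del (tpath ht u p) (Or.inr hp)).trans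
      (reach_del (tpath ht p q) h)).trans ?_)
    refine reach_del (tpath ht v q).reverse (Or.inl ?_)
    rwa [Walk.support_reverse, List.mem_reverse]
  constructor
  · by_contra hu; exact key (Or.inl hu)
  · by_contra hv; exact key (Or.inr hv)

/-- Helly property for path-closed subsets of a tree. -/
lemma tree_helly (ht : tree.IsTree) {ι : Type} [DecidableEq ι] (s : Finset ι) :
    ∀ f : ι → Set T,
      (∀ i, ∀ p ∈ f i, ∀ q ∈ f i, ∀ x ∈ (tpath ht p q).support, x ∈ f i) →
      (∀ i ∈ s, ∀ j ∈ s, (f i ∩ f j).Nonempty) →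
      s.Nonempty → ∃ t, ∀ i ∈ s, t ∈ f i := by
  classical
  induction s using Finset.induction_on with
  | empty => intro f _ _ hne; exact absurd hne (by simp)
  | @insert a s ha ih =>
      intro f hPC hpair _
      rcases s.eq_empty_or_nonempty with rfl | hs
      · obtain ⟨t, htm⟩ := hpair a (by simp) a (by simp)
        exact ⟨t, by simpa using htm.1⟩
      · have ihres : ∃ t, ∀ i ∈ s, t ∈ f i ∩ f a := by
          refine ih (fun i => f i ∩ f a)
            (fun i p hp q hq x hx =>
              ⟨hPC i p hp.1 q hq.1 x hx, hPC a p hp.2 q hq.2 x hx⟩)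
            ?_ hs
          intro i hi j hj
          obtain ⟨x, hxi, hxj⟩ := hpair i (by simp [hi]) j (by simp [hj])
          obtain ⟨y, hyj, hya⟩ := hpair j (by simp [hj]) a (by simp)
          obtain ⟨z, hzi, hza⟩ := hpair i (by simp [hi]) a (by simp)
          obtain ⟨m, h1, h2, h3⟩ := tpath_median ht x y z
          exact ⟨m, ⟨⟨hPC i x hxi z hzi m h3, hPC a y hya z hza m h2⟩,
            hPC j x hxj y hyj m h1, hPC a y hya z hza m h2⟩⟩
        obtain ⟨t, htm⟩ := ihres
        obtain ⟨i0, hi0⟩ := hs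
        refine ⟨t, ?_⟩
        intro i hi
        rcases Finset.mem_insert.mp hi with rfl | hi
        · exact (htm i0 hi0).2
        · exact (htm i hi).1

end TreeAux

/-- A set of vertices is independent if no two of its members are adjacent. -/
def SimpleGraph.IsIndep {V : Type} (G : SimpleGraph V) (s : Set V) : Prop :=
  s.Pairwise fun u v => ¬ G.Adj u v

/-- The independence number of the subgraph of `G` induced by `W`:
the largest size of a finite independent set contained in `W`. -/
noncomputable def alphaOn {V : Type} (G : SimpleGraph V) (W : Set V) : ℕ :=
  sSup {n | ∃ S : Finset V, ↑S ⊆ W ∧ G.IsIndep ↑S ∧ S.card = n}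

/-- A tree decomposition of `G` with decomposition tree `tree`. -/
structure TreeDecomp {V T : Type} (G : SimpleGraph V) (tree : SimpleGraph T) : Type where
  bag : T → Set V
  isTree : tree.IsTree
  mem_bag : ∀ v : V, ∃ t, v ∈ bag t
  edge_bag : ∀ ⦃u v : V⦄, G.Adj u v → ∃ t, u ∈ bag t ∧ v ∈ bag t
  conn : ∀ v : V, (tree.induce {t | v ∈ bag t}).Connected

/-- `tree-α(G) ≤ k`: some tree decomposition of `G` has all bags of independence number `≤ k`. -/
def TreeAlphaLE {V : Type} (G : SimpleGraph V) (k : ℕ) : Prop :=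
  ∃ (T : Type) (tree : SimpleGraph T) (td : TreeDecomp G tree),
    ∀ t : T, alphaOn G (td.bag t) ≤ k

/-- if `A` and `B` are disjoint and every vertex of `A` is adjacent to every
vertex of `B`, then every tree decomposition has a bag containing `A` or a bag containing `B`. -/
theorem stmt3 {V T : Type} [Finite V] (G : SimpleGraph V) (A B : Set V)
    (hdisj : Disjoint A B) (hadj : ∀ a ∈ A, ∀ b ∈ B, G.Adj a b)
    (tree : SimpleGraph T) (td : TreeDecomp G tree) :
    ∃ t : T, A ⊆ td.bag t ∨ B ⊆ td.bag t := by
  classical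
  by_contra hc
  push_neg at hc
  have ht := td.isTree
  set Tv : V → Set T := fun v => {t | v ∈ td.bag t} with hTvdef
  have hPC : ∀ v, ∀ p ∈ Tv v, ∀ q ∈ Tv v, ∀ x ∈ (tpath ht p q).support, x ∈ Tv v := by
    intro v p hp q hq x hx
    have hconn : (tree.induce (Tv v)).Connected := td.conn v
    obtain ⟨w⟩ := hconn.preconnected ⟨p, hp⟩ ⟨q, hq⟩
    let f : tree.induce (Tv v) →g tree := ⟨Subtype.val, fun {a b} h => h⟩
    have hW : (w.map f).bypass = tpath ht p q := path_eq_tpath ht (w.map f).bypass_isPath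
    rw [← hW] at hx
    have hx2 := (w.map f).support_bypass_subset hx
    rw [Walk.support_map] at hx2
    obtain ⟨⟨x', hx'⟩, -, rfl⟩ := List.mem_map.mp hx2
    exact hx'
  have hA : ∃ a ∈ A, ∃ a' ∈ A, ¬(Tv a ∩ Tv a').Nonempty := by
    by_contra h
    push_neg at h
    rcases Set.eq_empty_or_nonempty A with rfl | hAne
    · obtain ⟨t0⟩ := ht.isConnected.nonempty
      exact (hc t0).1 (by simp)
    · have hfin : A.Finite := Set.toFinite A
      obtain ⟨t, htA⟩ := tree_helly ht hfin.toFinset Tv hPC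
        (fun i hi j hj => h i (hfin.mem_toFinset.mp hi) j (hfin.mem_toFinset.mp hj))
        ⟨hAne.choose, hfin.mem_toFinset.mpr hAne.choose_spec⟩
      exact (hc t).1 (fun a haA => htA a (hfin.mem_toFinset.mpr haA))
  obtain ⟨a, ha, a', ha', hdisjT⟩ := hA
  have hdisj2 : ∀ t, ¬(t ∈ Tv a ∧ t ∈ Tv a') := fun t h => hdisjT ⟨t, h.1, h.2⟩
  obtain ⟨x, hx⟩ := td.mem_bag a
  obtain ⟨y, hy⟩ := td.mem_bag a'
  have hxa : x ∈ Tv a := hx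
  have hya' : y ∈ Tv a' := hy
  have hyA : y ∉ Tv a := fun h => hdisj2 y ⟨h, hya'⟩
  obtain ⟨u, v, huv, hu, hv, Q, hQpath, huQ⟩ :=
    crossing (Tv a) (tpath ht x y) (tpath_isPath ht x y) hxa hyA
  have hQ : Q = tpath ht v y := path_eq_tpath ht hQpath
  have hBu : B ⊆ td.bag u := by
    intro b hb
    obtain ⟨s1, hs1a, hs1b⟩ := td.edge_bag (hadj a ha b hb)
    obtain ⟨s2, hs2a', hs2b⟩ := td.edge_bag (hadj a' ha' b hb)
    have hua' : u ∉ Tv a' := fun h => hdisj2 u ⟨hu, h⟩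
    have hp : v ∉ (tpath ht u s1).support := fun h => hv (hPC a u hu s1 hs1a _ h)
    have hq : u ∉ (tpath ht v s2).support := by
      intro h
      rcases tpath_concat ht v y s2 u h with h1 | h2
      · exact huQ (by rw [hQ]; exact h1)
      · exact hua' (hPC a' y hya' s2 hs2a' u h2)
    exact hPC b s1 hs1b s2 hs2b u (cross_edge ht huv hp hq).1
  exact (hc u).2 hBu
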